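/- For every odd n ≥ 3, every tiling of the 6×n rectangle by T-tetrominoes and monominoes uses at least 2 monominoes, and there exists such a tiling using exactly 2; i.e., M(6,n) = 2 for odd n ≥ 3. -/

import Mathlib

/-- The four rotations of the T-tetromino, as sets of cells (row, col). -/
def tShapes : Finset (Finset (ℤ × ℤ)) :=
  { {(0,0),(0,1),(0,2),(1,1)},
    {(0,0),(0,1),(0,2),(-1,1)},
    {(0,0),(1,0),(2,0),(1,1)},
    {(0,0),(1,0),(2,0),(1,-1)} }

/-- A placed T-tetromino: a translate of one of the four rotations. -/
def IsTPlacement (p : Finset (ℤ × ℤ)) : Prop :=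
  ∃ s ∈ tShapes, ∃ t : ℤ × ℤ, p = s.image (· + t)

/-- The m×n rectangle of cells. -/
noncomputable def rectCells (m n : ℕ) : Finset (ℤ × ℤ) :=
  (Finset.Ico 0 (m:ℤ)) ×ˢ (Finset.Ico 0 (n:ℤ))

/-- A tiling of a region `R` by T-tetrominoes and single-cell monominoes. -/
def IsTiling (P : Finset (Finset (ℤ × ℤ))) (R : Finset (ℤ × ℤ)) : Prop :=
  (∀ p ∈ P, IsTPlacement p ∨ ∃ c, p = {c}) ∧
  (∀ p ∈ P, ∀ q ∈ P, p ≠ q → Disjoint p q) ∧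
  P.biUnion id = R

/-- A tiling of a region `R` by T-tetrominoes alone. -/
def IsTTiling (P : Finset (Finset (ℤ × ℤ))) (R : Finset (ℤ × ℤ)) : Prop :=
  (∀ p ∈ P, IsTPlacement p) ∧
  (∀ p ∈ P, ∀ q ∈ P, p ≠ q → Disjoint p q) ∧
  P.biUnion id = R

/-- The number of monominoes (single-cell pieces) used in a tiling. -/
def monoCount (P : Finset (Finset (ℤ × ℤ))) : ℕ :=
  (P.filter (fun p => p.card = 1)).card

/-- The gap number `M(m,n)`: the least number of monominoes in a tiling of the
m×n rectangle by T-tetrominoes and monominoes. -/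
noncomputable def gapNumber (m n : ℕ) : ℕ :=
  sInf {g | ∃ P, IsTiling P (rectCells m n) ∧ monoCount P = g}

section Aux
open Finset

abbrev Cell := ℤ × ℤ

def sh0 : Finset Cell := {(0,0),(0,1),(0,2),(1,1)}
def sh1 : Finset Cell := {(0,0),(0,1),(0,2),(-1,1)}
def sh2 : Finset Cell := {(0,0),(1,0),(2,0),(1,1)}
def sh3 : Finset Cell := {(0,0),(1,0),(2,0),(1,-1)}
def pc (s : Finset Cell) (t : Cell) : Finset Cell := s.image (· + t)

lemma placement_pc {s : Finset Cell} (hs : s ∈ tShapes) (t : Cell) : IsTPlacement (pc s t) :=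
  ⟨s, hs, t, rfl⟩

lemma card_of_placement {p : Finset Cell} (h : IsTPlacement p) : p.card = 4 := by
  obtain ⟨s, hs, t, rfl⟩ := h
  rw [Finset.card_image_of_injective _ (add_left_injective t)]
  have h4 : ∀ s ∈ tShapes, Finset.card s = 4 := by decide
  exact h4 s hs

lemma mem_shift {X : Finset Cell} {t a : Cell} : a ∈ X.image (· + t) ↔ a - t ∈ X := by
  constructor
  · intro h
    obtain ⟨x, hx, rfl⟩ := Finset.mem_image.1 h
    simpa using hx
  · intro h; exact Finset.mem_image.2 ⟨a - t, h, sub_add_cancel a t⟩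

lemma tt_union {P Q : Finset (Finset Cell)} {R S : Finset Cell}
    (hP : IsTTiling P R) (hQ : IsTTiling Q S) (hd : Disjoint R S) :
    IsTTiling (P ∪ Q) (R ∪ S) := by
  obtain ⟨hP1, hP2, hP3⟩ := hP
  obtain ⟨hQ1, hQ2, hQ3⟩ := hQ
  have hsubP : ∀ p ∈ P, p ⊆ R := fun p hp => hP3 ▸ Finset.subset_biUnion_of_mem id hp
  have hsubQ : ∀ p ∈ Q, p ⊆ S := fun p hp => hQ3 ▸ Finset.subset_biUnion_of_mem id hp
  refine ⟨?_, ?_, ?_⟩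
  · intro p hp
    rcases Finset.mem_union.1 hp with h | h
    exacts [hP1 p h, hQ1 p h]
  · intro p hp q hq hne
    rcases Finset.mem_union.1 hp with h1 | h1 <;> rcases Finset.mem_union.1 hq with h2 | h2
    · exact hP2 p h1 q h2 hne
    · exact Disjoint.mono (hsubP p h1) (hsubQ q h2) hd
    · exact (Disjoint.mono (hsubP q h2) (hsubQ p h1) hd).symm
    · exact hQ2 p h1 q h2 hne
  · ext a
    simp only [Finset.mem_biUnion, Finset.mem_union, id]
    constructor
    · rintro ⟨p, hp | hp, ha⟩
      · exact Or.inl (hP3 ▸ Finset.mem_biUnion.2 ⟨p, hp, ha⟩)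
      · exact Or.inr (hQ3 ▸ Finset.mem_biUnion.2 ⟨p, hp, ha⟩)
    · rintro (h | h)
      · rw [← hP3] at h; obtain ⟨p, hp, ha⟩ := Finset.mem_biUnion.1 h
        exact ⟨p, Or.inl hp, ha⟩
      · rw [← hQ3] at h; obtain ⟨p, hp, ha⟩ := Finset.mem_biUnion.1 h
        exact ⟨p, Or.inr hp, ha⟩

lemma tt_shift {P : Finset (Finset Cell)} {R : Finset Cell} (h : IsTTiling P R) (t : Cell) :
    IsTTiling (P.image (fun p => p.image (· + t))) (R.image (· + t)) := by
  obtain ⟨h1, h2, h3⟩ := h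
  refine ⟨?_, ?_, ?_⟩
  · intro p hp
    obtain ⟨q, hq, rfl⟩ := Finset.mem_image.1 hp
    obtain ⟨s, hs, u, rfl⟩ := h1 q hq
    refine ⟨s, hs, u + t, ?_⟩
    rw [Finset.image_image]; congr 1; funext x; simp [add_assoc]
  · intro p hp q hq hne
    obtain ⟨p0, hp0, rfl⟩ := Finset.mem_image.1 hp
    obtain ⟨q0, hq0, rfl⟩ := Finset.mem_image.1 hq
    have hne0 : p0 ≠ q0 := fun e => hne (by rw [e])
    exact (Finset.disjoint_image (add_left_injective t)).2 (h2 p0 hp0 q0 hq0 hne0)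
  · ext a
    simp only [Finset.mem_biUnion, Finset.mem_image, id]
    constructor
    · rintro ⟨p, ⟨p0, hp0, rfl⟩, hx⟩
      obtain ⟨x, hx0, rfl⟩ := Finset.mem_image.1 hx
      exact ⟨x, by rw [← h3]; exact Finset.mem_biUnion.2 ⟨p0, hp0, hx0⟩, rfl⟩
    · rintro ⟨x, hx, rfl⟩
      rw [← h3] at hx
      obtain ⟨p0, hp0, hx0⟩ := Finset.mem_biUnion.1 hx
      exact ⟨p0.image (· + t), ⟨p0, hp0, rfl⟩, Finset.mem_image_of_mem _ hx0⟩

end Aux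

def LApieces : Finset (Finset Cell) := {pc sh2 (0,0), pc sh0 (0,1), pc sh1 (3,1), pc sh2 (3,0), pc sh1 (5,1)}
def LAreg : Finset Cell := ({(0,0),(0,1),(0,2),(0,3),(1,0),(1,1),(1,2),(2,0),(2,2),(3,0),(3,1),(3,2),(3,3),(4,0),(4,1),(4,2),(5,0),(5,1),(5,2),(5,3)} : Finset Cell)
def SApieces : Finset (Finset Cell) := {pc sh1 (1,0), pc sh0 (0,2), pc sh0 (2,0), pc sh1 (3,2), pc sh0 (4,0), pc sh1 (5,2)}
def SAreg : Finset Cell := ({(0,1),(0,2),(0,3),(0,4),(1,0),(1,1),(1,2),(1,3),(2,0),(2,1),(2,2),(2,3),(3,1),(3,2),(3,3),(3,4),(4,0),(4,1),(4,2),(4,3),(5,1),(5,2),(5,3),(5,4)} : Finset Cell)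
def RApieces : Finset (Finset Cell) := {pc sh3 (0,1), pc sh3 (3,1)}
def RAreg : Finset Cell := ({(0,1),(1,0),(1,1),(2,1),(3,1),(4,0),(4,1),(5,1)} : Finset Cell)
def LBpieces : Finset (Finset Cell) := {pc sh0 (0,0), pc sh3 (0,3), pc sh2 (1,0), pc sh1 (3,1), pc sh1 (5,0), pc sh0 (4,2)}
def LBreg : Finset Cell := ({(0,0),(0,1),(0,2),(0,3),(1,0),(1,1),(1,2),(1,3),(2,0),(2,1),(2,2),(2,3),(3,0),(3,1),(3,2),(3,3),(4,1),(4,2),(4,3),(4,4),(5,0),(5,1),(5,2),(5,3)} : Finset Cell)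
def RBpieces : Finset (Finset Cell) := {pc sh0 (0,0), pc sh2 (1,0), pc sh3 (2,2), pc sh1 (5,0)}
def RBreg : Finset Cell := ({(0,0),(0,1),(0,2),(1,0),(1,1),(2,0),(2,1),(2,2),(3,0),(3,1),(3,2),(4,1),(4,2),(5,0),(5,1),(5,2)} : Finset Cell)
def B3pieces : Finset (Finset Cell) := {pc sh0 (0,0), pc sh3 (1,2), pc sh2 (2,0), pc sh1 (5,0)}
def B3reg : Finset Cell := ({(0,0),(0,1),(0,2),(1,1),(1,2),(2,0),(2,1),(2,2),(3,0),(3,1),(3,2),(4,0),(4,1),(5,0),(5,1),(5,2)} : Finset Cell)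
def SBpieces : Finset (Finset Cell) := LBpieces
def SBreg : Finset Cell := LBreg

-- Concrete tilings
lemma LA_tiling : IsTTiling LApieces LAreg := by
  refine ⟨?_, by decide, by decide⟩
  intro p hp
  simp only [LApieces, Finset.mem_insert, Finset.mem_singleton] at hp
  rcases hp with rfl|rfl|rfl|rfl|rfl <;> exact placement_pc (by decide) _

lemma SA_tiling : IsTTiling SApieces SAreg := by
  refine ⟨?_, by decide, by decide⟩
  intro p hp
  simp only [SApieces, Finset.mem_insert, Finset.mem_singleton] at hp
  rcases hp with rfl|rfl|rfl|rfl|rfl|rfl <;> exact placement_pc (by decide) _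

lemma RA_tiling : IsTTiling RApieces RAreg := by
  refine ⟨?_, by decide, by decide⟩
  intro p hp
  simp only [RApieces, Finset.mem_insert, Finset.mem_singleton] at hp
  rcases hp with rfl|rfl <;> exact placement_pc (by decide) _

lemma LB_tiling : IsTTiling LBpieces LBreg := by
  refine ⟨?_, by decide, by decide⟩
  intro p hp
  simp only [LBpieces, Finset.mem_insert, Finset.mem_singleton] at hp
  rcases hp with rfl|rfl|rfl|rfl|rfl|rfl <;> exact placement_pc (by decide) _

lemma SB_tiling : IsTTiling SBpieces SBreg := LB_tiling

lemma RB_tiling : IsTTiling RBpieces RBreg := by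
  refine ⟨?_, by decide, by decide⟩
  intro p hp
  simp only [RBpieces, Finset.mem_insert, Finset.mem_singleton] at hp
  rcases hp with rfl|rfl|rfl|rfl <;> exact placement_pc (by decide) _

lemma B3_tiling : IsTTiling B3pieces B3reg := by
  refine ⟨?_, by decide, by decide⟩
  intro p hp
  simp only [B3pieces, Finset.mem_insert, Finset.mem_singleton] at hp
  rcases hp with rfl|rfl|rfl|rfl <;> exact placement_pc (by decide) _

-- membership characterizations
lemma SAreg_mem (a b : ℤ) : (a,b) ∈ SAreg ↔
    ((a=0 ∨ a=3 ∨ a=5) ∧ 1 ≤ b ∧ b ≤ 4) ∨ ((a=1 ∨ a=2 ∨ a=4) ∧ 0 ≤ b ∧ b ≤ 3) := by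
  rw [show SAreg = ({0,3,5} ×ˢ Finset.Icc 1 4) ∪ (({1,2,4} : Finset ℤ) ×ˢ Finset.Icc (0:ℤ) 3)
    from by decide]
  simp [Finset.mem_union, Finset.mem_product, Finset.mem_Icc, Finset.mem_insert]

lemma RAreg_mem (a b : ℤ) : (a,b) ∈ RAreg ↔
    ((a=1 ∨ a=4) ∧ 0 ≤ b ∧ b ≤ 1) ∨ ((a=0 ∨ a=2 ∨ a=3 ∨ a=5) ∧ b = 1) := by
  rw [show RAreg = ({1,4} ×ˢ Finset.Icc 0 1) ∪ (({0,2,3,5} : Finset ℤ) ×ˢ ({1} : Finset ℤ))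
    from by decide]
  simp only [Finset.mem_union, Finset.mem_product, Finset.mem_Icc, Finset.mem_insert,
    Finset.mem_singleton, Prod.mk.injEq]

lemma SBreg_mem (a b : ℤ) : (a,b) ∈ SBreg ↔
    ((a=0 ∨ a=1 ∨ a=2 ∨ a=3 ∨ a=5) ∧ 0 ≤ b ∧ b ≤ 3) ∨ (a=4 ∧ 1 ≤ b ∧ b ≤ 4) := by
  rw [show SBreg = ({0,1,2,3,5} ×ˢ Finset.Icc 0 3) ∪ (({4} : Finset ℤ) ×ˢ Finset.Icc (1:ℤ) 4)
    from by decide]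
  simp only [Finset.mem_union, Finset.mem_product, Finset.mem_Icc, Finset.mem_insert,
    Finset.mem_singleton, Prod.mk.injEq]

lemma RBreg_mem (a b : ℤ) : (a,b) ∈ RBreg ↔
    ((a=0 ∨ a=2 ∨ a=3 ∨ a=5) ∧ 0 ≤ b ∧ b ≤ 2) ∨ (a=1 ∧ 0 ≤ b ∧ b ≤ 1) ∨ (a=4 ∧ 1 ≤ b ∧ b ≤ 2) := by
  rw [show RBreg = ({0,2,3,5} ×ˢ Finset.Icc 0 2) ∪ (({1} : Finset ℤ) ×ˢ Finset.Icc (0:ℤ) 1)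
      ∪ (({4} : Finset ℤ) ×ˢ Finset.Icc (1:ℤ) 2) from by decide]
  simp only [Finset.mem_union, Finset.mem_product, Finset.mem_Icc, Finset.mem_insert,
    Finset.mem_singleton, Prod.mk.injEq]
  all_goals omega

-- Growing regions
noncomputable def GA (m : ℕ) : Finset Cell :=
  (rectCells 6 m \ {((2:ℤ),(1:ℤ))}) ∪ {((0:ℤ),(m:ℤ)),((3:ℤ),(m:ℤ)),((5:ℤ),(m:ℤ))}

noncomputable def GB (m : ℕ) : Finset Cell :=
  (rectCells 6 m \ {((4:ℤ),(0:ℤ))}) ∪ {((4:ℤ),(m:ℤ))}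

lemma GA_base : GA 3 = LAreg := by decide

lemma GB_base : GB 4 = LBreg := by decide

lemma GA_step (m : ℕ) (hm : 3 ≤ m) :
    Disjoint (GA m) (SAreg.image (· + ((0:ℤ),(m:ℤ)))) ∧
    GA (m+4) = GA m ∪ SAreg.image (· + ((0:ℤ),(m:ℤ))) := by
  constructor
  · rw [Finset.disjoint_left]
    rintro ⟨a,b⟩ h1 h2
    simp only [GA, rectCells, mem_shift, Prod.mk_sub_mk, sub_zero, SAreg_mem,
      Finset.mem_union, Finset.mem_sdiff, Finset.mem_product, Finset.mem_Ico,
      Finset.mem_insert, Finset.mem_singleton, Prod.mk.injEq] at h1 h2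
    omega
  · ext ⟨a,b⟩
    simp only [GA, rectCells, mem_shift, Prod.mk_sub_mk, sub_zero, SAreg_mem,
      Finset.mem_union, Finset.mem_sdiff, Finset.mem_product, Finset.mem_Ico,
      Finset.mem_insert, Finset.mem_singleton, Prod.mk.injEq]
    push_cast
    omega

lemma GB_step (m : ℕ) (hm : 4 ≤ m) :
    Disjoint (GB m) (SBreg.image (· + ((0:ℤ),(m:ℤ)))) ∧
    GB (m+4) = GB m ∪ SBreg.image (· + ((0:ℤ),(m:ℤ))) := by
  constructor
  · rw [Finset.disjoint_left]
    rintro ⟨a,b⟩ h1 h2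
    simp only [GB, rectCells, mem_shift, Prod.mk_sub_mk, sub_zero, SBreg_mem,
      Finset.mem_union, Finset.mem_sdiff, Finset.mem_product, Finset.mem_Ico,
      Finset.mem_insert, Finset.mem_singleton, Prod.mk.injEq] at h1 h2
    omega
  · ext ⟨a,b⟩
    simp only [GB, rectCells, mem_shift, Prod.mk_sub_mk, sub_zero, SBreg_mem,
      Finset.mem_union, Finset.mem_sdiff, Finset.mem_product, Finset.mem_Ico,
      Finset.mem_insert, Finset.mem_singleton, Prod.mk.injEq]
    push_cast
    omega

lemma GA_tiled (k : ℕ) : ∃ P, IsTTiling P (GA (3+4*k)) := by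
  induction k with
  | zero => exact ⟨LApieces, by rw [show 3+4*0 = 3 from rfl, GA_base]; exact LA_tiling⟩
  | succ k ih =>
    obtain ⟨P, hP⟩ := ih
    obtain ⟨hd, heq⟩ := GA_step (3+4*k) (by omega)
    refine ⟨P ∪ SApieces.image (fun p => p.image (· + ((0:ℤ),((3+4*k:ℕ):ℤ)))), ?_⟩
    rw [show 3+4*(k+1) = (3+4*k)+4 by ring, heq]
    exact tt_union hP (tt_shift SA_tiling _) hd

lemma GB_tiled (k : ℕ) : ∃ P, IsTTiling P (GB (4+4*k)) := by
  induction k with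
  | zero => exact ⟨LBpieces, by rw [show 4+4*0 = 4 from rfl, GB_base]; exact LB_tiling⟩
  | succ k ih =>
    obtain ⟨P, hP⟩ := ih
    obtain ⟨hd, heq⟩ := GB_step (4+4*k) (by omega)
    refine ⟨P ∪ SBpieces.image (fun p => p.image (· + ((0:ℤ),((4+4*k:ℕ):ℤ)))), ?_⟩
    rw [show 4+4*(k+1) = (4+4*k)+4 by ring, heq]
    exact tt_union hP (tt_shift SB_tiling _) hd

-- caps
lemma capA (m : ℕ) (hm : 3 ≤ m) :
    Disjoint (GA m) (RAreg.image (· + ((0:ℤ),(m:ℤ)))) ∧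
    rectCells 6 (m+2) \ {((2:ℤ),(1:ℤ)), ((2:ℤ),(m:ℤ))} =
      GA m ∪ RAreg.image (· + ((0:ℤ),(m:ℤ))) := by
  constructor
  · rw [Finset.disjoint_left]
    rintro ⟨a,b⟩ h1 h2
    simp only [GA, rectCells, mem_shift, Prod.mk_sub_mk, sub_zero, RAreg_mem,
      Finset.mem_union, Finset.mem_sdiff, Finset.mem_product, Finset.mem_Ico,
      Finset.mem_insert, Finset.mem_singleton, Prod.mk.injEq] at h1 h2
    omega
  · ext ⟨a,b⟩
    simp only [GA, rectCells, mem_shift, Prod.mk_sub_mk, sub_zero, RAreg_mem,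
      Finset.mem_union, Finset.mem_sdiff, Finset.mem_product, Finset.mem_Ico,
      Finset.mem_insert, Finset.mem_singleton, Prod.mk.injEq]
    push_cast
    omega

lemma capB (m : ℕ) (hm : 4 ≤ m) :
    Disjoint (GB m) (RBreg.image (· + ((0:ℤ),(m:ℤ)))) ∧
    rectCells 6 (m+3) \ {((4:ℤ),(0:ℤ)), ((1:ℤ),(m:ℤ)+2)} =
      GB m ∪ RBreg.image (· + ((0:ℤ),(m:ℤ))) := by
  constructor
  · rw [Finset.disjoint_left]
    rintro ⟨a,b⟩ h1 h2
    simp only [GB, rectCells, mem_shift, Prod.mk_sub_mk, sub_zero, RBreg_mem,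
      Finset.mem_union, Finset.mem_sdiff, Finset.mem_product, Finset.mem_Ico,
      Finset.mem_insert, Finset.mem_singleton, Prod.mk.injEq] at h1 h2
    omega
  · ext ⟨a,b⟩
    simp only [GB, rectCells, mem_shift, Prod.mk_sub_mk, sub_zero, RBreg_mem,
      Finset.mem_union, Finset.mem_sdiff, Finset.mem_product, Finset.mem_Ico,
      Finset.mem_insert, Finset.mem_singleton, Prod.mk.injEq]
    push_cast
    omega

lemma B3_region : B3reg = rectCells 6 3 \ {((1:ℤ),(0:ℤ)), ((4:ℤ),(2:ℤ))} := by decide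

lemma exists_tt (n : ℕ) (hn : 3 ≤ n) (hodd : n % 2 = 1) :
    ∃ h1 h2 : Cell, h1 ≠ h2 ∧ h1 ∈ rectCells 6 n ∧ h2 ∈ rectCells 6 n ∧
      ∃ P, IsTTiling P (rectCells 6 n \ {h1, h2}) := by
  have hmem : ∀ a b : ℤ, 0 ≤ a → a < 6 → 0 ≤ b → b < (n:ℤ) → (a,b) ∈ rectCells 6 n := by
    intro a b h1 h2 h3 h4
    simp only [rectCells, Finset.mem_product, Finset.mem_Ico]
    exact ⟨⟨h1, h2⟩, h3, h4⟩
  rcases (show n % 4 = 1 ∨ n % 4 = 3 by omega) with h4 | h4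
  · obtain ⟨k, rfl⟩ : ∃ k, n = 5+4*k := ⟨(n-5)/4, by omega⟩
    obtain ⟨P, hP⟩ := GA_tiled k
    obtain ⟨hd, heq⟩ := capA (3+4*k) (by omega)
    refine ⟨(2,1), (2,((3+4*k:ℕ):ℤ)), by simp only [ne_eq, Prod.mk.injEq]; push_cast; omega,
      hmem 2 1 (by omega) (by omega) (by omega) (by push_cast; omega),
      hmem 2 _ (by omega) (by omega) (by push_cast; omega) (by push_cast; omega),
      P ∪ RApieces.image (fun p => p.image (· + ((0:ℤ),((3+4*k:ℕ):ℤ)))), ?_⟩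
    rw [show 5+4*k = (3+4*k)+2 by ring, heq]
    exact tt_union hP (tt_shift RA_tiling _) hd
  · rcases eq_or_ne n 3 with rfl | hne
    · exact ⟨(1,0), (4,2), by decide, hmem 1 0 (by omega) (by omega) (by omega) (by norm_num),
        hmem 4 2 (by omega) (by omega) (by omega) (by norm_num),
        B3pieces, by rw [← B3_region]; exact B3_tiling⟩
    · obtain ⟨k, rfl⟩ : ∃ k, n = 7+4*k := ⟨(n-7)/4, by omega⟩
      obtain ⟨P, hP⟩ := GB_tiled k
      obtain ⟨hd, heq⟩ := capB (4+4*k) (by omega)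
      refine ⟨(4,0), (1,((4+4*k:ℕ):ℤ)+2), by simp [Prod.ext_iff],
        hmem 4 0 (by omega) (by omega) (by omega) (by push_cast; omega),
        hmem 1 _ (by omega) (by omega) (by push_cast; omega) (by push_cast; omega),
        P ∪ RBpieces.image (fun p => p.image (· + ((0:ℤ),((4+4*k:ℕ):ℤ)))), ?_⟩
      rw [show 7+4*k = (4+4*k)+3 by ring, heq]
      exact tt_union hP (tt_shift RB_tiling _) hd

lemma exists_tiling_two (n : ℕ) (hn : 3 ≤ n) (hodd : n % 2 = 1) :
    ∃ P, IsTiling P (rectCells 6 n) ∧ monoCount P = 2 := by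
  obtain ⟨h1, h2, hne, hm1, hm2, Q, hQ1, hQ2, hQ3⟩ := exists_tt n hn hodd
  have hcard4 : ∀ p ∈ Q, p.card = 4 := fun p hp => card_of_placement (hQ1 p hp)
  have hsub : ∀ p ∈ Q, p ⊆ rectCells 6 n \ {h1, h2} :=
    fun p hp => hQ3 ▸ Finset.subset_biUnion_of_mem id hp
  have singdisj : ∀ p ∈ Q, ∀ c ∈ ({h1, h2} : Finset Cell), Disjoint p {c} := by
    intro p hp c hc
    rw [Finset.disjoint_singleton_right]
    intro hcp
    exact (Finset.mem_sdiff.1 (hsub p hp hcp)).2 hc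
  refine ⟨Q ∪ {{h1}, {h2}}, ⟨?_, ?_, ?_⟩, ?_⟩
  · intro p hp
    rcases Finset.mem_union.1 hp with h | h
    · exact Or.inl (hQ1 p h)
    · simp only [Finset.mem_insert, Finset.mem_singleton] at h
      rcases h with rfl | rfl
      exacts [Or.inr ⟨h1, rfl⟩, Or.inr ⟨h2, rfl⟩]
  · intro p hp q hq hne'
    rcases Finset.mem_union.1 hp with h | h <;> rcases Finset.mem_union.1 hq with h' | h'
    · exact hQ2 p h q h' hne'
    · simp only [Finset.mem_insert, Finset.mem_singleton] at h'
      rcases h' with rfl | rfl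
      · exact singdisj p h h1 (by simp)
      · exact singdisj p h h2 (by simp)
    · simp only [Finset.mem_insert, Finset.mem_singleton] at h
      rcases h with rfl | rfl
      · exact (singdisj q h' h1 (by simp)).symm
      · exact (singdisj q h' h2 (by simp)).symm
    · simp only [Finset.mem_insert, Finset.mem_singleton] at h h'
      rcases h with rfl | rfl <;> rcases h' with rfl | rfl
      · exact absurd rfl hne'
      · exact Finset.disjoint_singleton.2 hne
      · exact Finset.disjoint_singleton.2 hne.symm
      · exact absurd rfl hne'
  · ext a
    simp only [Finset.mem_biUnion, Finset.mem_union, Finset.mem_insert, Finset.mem_singleton, id]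
    constructor
    · rintro ⟨p, hp | hp, ha⟩
      · exact (Finset.mem_sdiff.1 (hsub p hp ha)).1
      · rcases hp with rfl | rfl
        · rw [Finset.mem_singleton] at ha; subst ha; exact hm1
        · rw [Finset.mem_singleton] at ha; subst ha; exact hm2
    · intro ha
      by_cases hc1 : a = h1
      · exact ⟨{h1}, Or.inr (Or.inl rfl), by simp [hc1]⟩
      by_cases hc2 : a = h2
      · exact ⟨{h2}, Or.inr (Or.inr rfl), by simp [hc2]⟩
      · have hmem : a ∈ rectCells 6 n \ {h1, h2} :=
          Finset.mem_sdiff.2 ⟨ha, by simp [hc1, hc2]⟩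
        rw [← hQ3] at hmem
        obtain ⟨p, hp, hap⟩ := Finset.mem_biUnion.1 hmem
        exact ⟨p, Or.inl hp, hap⟩
  · have hfilter : (Q ∪ {{h1}, {h2}}).filter (fun p => p.card = 1) = {{h1}, {h2}} := by
      ext p
      simp only [Finset.mem_filter, Finset.mem_union, Finset.mem_insert, Finset.mem_singleton]
      constructor
      · rintro ⟨hq | hq, hc⟩
        · rw [hcard4 p hq] at hc; norm_num at hc
        · exact hq
      · rintro (rfl | rfl) <;> exact ⟨Or.inr (by simp), by simp⟩
    rw [monoCount, hfilter, Finset.card_insert_of_notMem (by simpa using hne),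
      Finset.card_singleton]

lemma lower_bound (n : ℕ) (hodd : n % 2 = 1) (P : Finset (Finset Cell))
    (h : IsTiling P (rectCells 6 n)) : 2 ≤ monoCount P := by
  classical
  obtain ⟨h1, h2, h3⟩ := h
  have hcardR : (rectCells 6 n).card = 6 * n := by
    rw [rectCells, Finset.card_product]
    simp [Int.card_Ico]
  have hsum : ∑ p ∈ P, p.card = 6 * n := by
    calc ∑ p ∈ P, p.card = (P.biUnion id).card := (Finset.card_biUnion h2).symm
      _ = 6 * n := by rw [h3, hcardR]
  have hsplit := Finset.sum_filter_add_sum_filter_not P (fun p => p.card = 1)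
    (fun p => p.card)
  have hM : ∑ p ∈ P.filter (fun p => p.card = 1), p.card = monoCount P := by
    rw [monoCount, Finset.card_eq_sum_ones]
    exact Finset.sum_congr rfl (fun p hp => (Finset.mem_filter.1 hp).2)
  have hN : ∑ p ∈ P.filter (fun p => ¬ p.card = 1), p.card
      = 4 * (P.filter (fun p => ¬ p.card = 1)).card := by
    calc ∑ p ∈ P.filter (fun p => ¬ p.card = 1), p.card
        = ∑ _p ∈ P.filter (fun p => ¬ p.card = 1), 4 := by
          refine Finset.sum_congr rfl (fun p hp => ?_)
          obtain ⟨hpP, hp1⟩ := Finset.mem_filter.1 hp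
          rcases h1 p hpP with hpl | ⟨c, rfl⟩
          · exact card_of_placement hpl
          · simp at hp1
      _ = _ := by rw [Finset.sum_const, smul_eq_mul, mul_comm]
  omega

/-- M(6,n) = 2 for odd n ≥ 3: every tiling of a 6×n rectangle uses at least 2
monominoes, and there is a tiling with exactly 2. -/
theorem gapNumber_six_odd (n : ℕ) (hn : 3 ≤ n) (hodd : n % 2 = 1) :
    (∀ P : Finset (Finset (ℤ × ℤ)),
      IsTiling P (rectCells 6 n) → 2 ≤ monoCount P) ∧
    (∃ P : Finset (Finset (ℤ × ℤ)),
      IsTiling P (rectCells 6 n) ∧ monoCount P = 2) := by 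
  exact ⟨fun P hP => lower_bound n hodd P hP, exists_tiling_two n hn hodd⟩
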